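/- Let E be a finite index set, let λ : E → ℂ satisfy Re(λ i) < 0 for all i, let Φ : E → Matrix (Fin p) (Fin m) ℂ, and let τ > 0. Then Real.sqrt(∫_{t ∈ [0, τ]} ‖∑_{i ∈ E} exp(λ i · t) • Φ i‖_F² dt) ≤ ∑_{i ∈ E} (‖Φ i‖_F / Real.sqrt(−2 · Re(λ i))) · Real.sqrt(1 − Real.exp(2 · Re(λ i) · τ)). -/

import Mathlib

open MeasureTheory Complex Matrix

/-- Squared Frobenius norm of a complex matrix. -/
noncomputable def frobSq {p m : ℕ} (M : Matrix (Fin p) (Fin m) ℂ) : ℝ :=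
  ∑ i, ∑ j, ‖M i j‖ ^ 2

/-- Frobenius norm of a complex matrix. -/
noncomputable def frobNorm {p m : ℕ} (M : Matrix (Fin p) (Fin m) ℂ) : ℝ :=
  Real.sqrt (frobSq M)

section helpers

variable {α : Type*} [MeasurableSpace α] {μ : Measure α}
variable {E' : Type*} [NormedAddCommGroup E'] [InnerProductSpace ℂ E']

lemma norm_Lp_two (g : Lp E' 2 μ) : ‖g‖ = Real.sqrt (∫ a, ‖g a‖ ^ 2 ∂μ) := by
  have h2 := inner_self_eq_norm_sq (𝕜 := ℂ) g
  rw [MeasureTheory.L2.inner_def] at h2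
  simp_rw [inner_self_eq_norm_sq_to_K, ← RCLike.ofReal_pow] at h2
  rw [integral_ofReal, RCLike.ofReal_re] at h2
  rw [h2, Real.sqrt_sq (norm_nonneg g)]

lemma norm_toLp_two {f : α → E'} (hf : MemLp f 2 μ) :
    ‖hf.toLp f‖ = Real.sqrt (∫ a, ‖f a‖ ^ 2 ∂μ) := by
  rw [norm_Lp_two]
  congr 1
  refine integral_congr_ae ?_
  filter_upwards [hf.coeFn_toLp] with a ha
  rw [ha]

lemma sqrt_integral_sum_sq_le {ι : Type*} (s : Finset ι) (f : ι → α → E')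
    (hf : ∀ i ∈ s, MemLp (f i) 2 μ) :
    Real.sqrt (∫ a, ‖∑ i ∈ s, f i a‖ ^ 2 ∂μ) ≤
      ∑ i ∈ s, Real.sqrt (∫ a, ‖f i a‖ ^ 2 ∂μ) := by
  classical
  induction s using Finset.induction with
  | empty => simp
  | @insert j s hj ih =>
    have hfj : MemLp (f j) 2 μ := hf j (Finset.mem_insert_self _ _)
    have hfs : ∀ i ∈ s, MemLp (f i) 2 μ := fun i hi => hf i (Finset.mem_insert_of_mem hi)
    have hsum : MemLp (fun a => ∑ i ∈ s, f i a) 2 μ := memLp_finset_sum s hfs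
    have hadd : MemLp (f j + fun a => ∑ i ∈ s, f i a) 2 μ := hfj.add hsum
    have h1 : Real.sqrt (∫ a, ‖∑ i ∈ insert j s, f i a‖ ^ 2 ∂μ) =
        ‖hadd.toLp _‖ := by
      rw [norm_toLp_two]
      congr 1
      refine integral_congr_ae (Filter.Eventually.of_forall fun a => ?_)
      simp only [Finset.sum_insert hj, Pi.add_apply]
    rw [h1, MemLp.toLp_add hfj hsum]
    calc ‖hfj.toLp (f j) + hsum.toLp _‖
        ≤ ‖hfj.toLp (f j)‖ + ‖hsum.toLp _‖ := norm_add_le _ _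
      _ ≤ Real.sqrt (∫ a, ‖f j a‖ ^ 2 ∂μ) + ∑ i ∈ s, Real.sqrt (∫ a, ‖f i a‖ ^ 2 ∂μ) := by
          rw [norm_toLp_two, norm_toLp_two]
          exact add_le_add_right (ih hfs) _
      _ = ∑ i ∈ insert j s, Real.sqrt (∫ a, ‖f i a‖ ^ 2 ∂μ) := by
          rw [Finset.sum_insert hj]

end helpers

lemma integral_exp_mul_real (c : ℝ) (hc : c ≠ 0) (a b : ℝ) :
    ∫ x in a..b, Real.exp (c * x) = (Real.exp (c * b) - Real.exp (c * a)) / c := by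
  have D : ∀ x : ℝ, HasDerivAt (fun y => Real.exp (c * y) / c) (Real.exp (c * x)) x := by
    intro x
    have h1 : HasDerivAt (fun y : ℝ => c * y) c x := by
      simpa using (hasDerivAt_id x).const_mul c
    have h2 := (Real.hasDerivAt_exp (c * x)).comp x h1
    have h3 := h2.div_const c
    simpa [mul_div_assoc, mul_div_cancel_right₀, hc] using h3
  rw [intervalIntegral.integral_eq_sub_of_hasDerivAt (fun x _ => D x)
    ((Real.continuous_exp.comp (continuous_const.mul continuous_id)).intervalIntegrable a b)]
  rw [div_sub_div_same]

theorem time_limited_h2_truncation_error_bound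
    (E : Type*) [Fintype E] (p m : ℕ)
    (lam : E → ℂ) (hlam : ∀ i, (lam i).re < 0)
    (Φ : E → Matrix (Fin p) (Fin m) ℂ) (τ : ℝ) (hτ : 0 < τ) :
    Real.sqrt (∫ t in (0 : ℝ)..τ,
        frobSq (∑ i, Complex.exp (lam i * (t : ℂ)) • Φ i)) ≤
      ∑ i, (frobNorm (Φ i) / Real.sqrt (-2 * (lam i).re)) *
        Real.sqrt (1 - Real.exp (2 * (lam i).re * τ)) := by
  classical
  set E' := EuclideanSpace ℂ (Fin p × Fin m)
  -- embed matrices into Euclidean space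
  let T : Matrix (Fin p) (Fin m) ℂ → E' := fun M => WithLp.toLp 2 (fun x : Fin p × Fin m => M x.1 x.2)
  have hT : ∀ M, frobSq M = ‖T M‖ ^ 2 := by
    intro M
    rw [EuclideanSpace.norm_eq, Real.sq_sqrt (Finset.sum_nonneg fun _ _ => sq_nonneg _)]
    rw [frobSq, Fintype.sum_prod_type]
  have hTnorm : ∀ M, frobNorm M = ‖T M‖ := fun M => by
    rw [frobNorm, hT, Real.sqrt_sq (norm_nonneg _)]
  set μ : Measure ℝ := volume.restrict (Set.Ioc 0 τ) with hμ
  haveI : IsFiniteMeasure μ := ⟨by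
    rw [hμ, Measure.restrict_apply_univ, Real.volume_Ioc]; exact ENNReal.ofReal_lt_top⟩
  let F : E → ℝ → E' := fun i t => Complex.exp (lam i * (t : ℂ)) • T (Φ i)
  have hFnorm : ∀ i t, ‖F i t‖ = Real.exp ((lam i).re * t) * ‖T (Φ i)‖ := by
    intro i t
    rw [norm_smul, Complex.norm_exp]
    congr 2
    simp [Complex.mul_re]
  have hF : ∀ i, MemLp (F i) 2 μ := by
    intro i
    have hcont : Continuous (F i) :=
      ((Complex.continuous_exp.comp (continuous_const.mul Complex.continuous_ofReal)).smul
        continuous_const)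
    refine MemLp.of_bound hcont.aestronglyMeasurable (‖T (Φ i)‖) ?_
    rw [hμ]
    rw [ae_restrict_iff' measurableSet_Ioc]
    refine Filter.Eventually.of_forall fun t ht => ?_
    rw [hFnorm]
    have h1 : Real.exp ((lam i).re * t) ≤ 1 := by
      rw [Real.exp_le_one_iff]
      exact mul_nonpos_of_nonpos_of_nonneg (hlam i).le ht.1.le
    calc Real.exp ((lam i).re * t) * ‖T (Φ i)‖ ≤ 1 * ‖T (Φ i)‖ :=
          mul_le_mul_of_nonneg_right h1 (norm_nonneg _)
      _ = ‖T (Φ i)‖ := one_mul _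
  -- rewrite LHS
  have hLHS : (∫ t in (0 : ℝ)..τ, frobSq (∑ i, Complex.exp (lam i * (t : ℂ)) • Φ i)) =
      ∫ a, ‖∑ i, F i a‖ ^ 2 ∂μ := by
    rw [intervalIntegral.integral_of_le hτ.le]
    refine integral_congr_ae (Filter.Eventually.of_forall fun t => ?_)
    dsimp only
    rw [hT]
    have hTe : T (∑ i, Complex.exp (lam i * (t : ℂ)) • Φ i) = ∑ i, F i t := by
      ext x
      simp only [T, F, Finset.sum_apply, Matrix.sum_apply, Matrix.smul_apply, smul_eq_mul,
        PiLp.smul_apply]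
      rw [WithLp.ofLp_sum, Finset.sum_apply]
      rfl
    rw [hTe]
  rw [hLHS]
  have hmink := sqrt_integral_sum_sq_le (μ := μ) Finset.univ F (fun i _ => hF i)
  refine hmink.trans (Finset.sum_le_sum fun i _ => ?_)
  -- per-term computation
  set c : ℝ := 2 * (lam i).re with hc
  have hcneg : c < 0 := by
    have := hlam i; simp only [hc]; linarith
  have hexp1 : Real.exp (c * τ) < 1 := by
    rw [Real.exp_lt_one_iff]
    exact mul_neg_of_neg_of_pos hcneg hτ
  have hint : (∫ a, ‖F i a‖ ^ 2 ∂μ) = ‖T (Φ i)‖ ^ 2 * ((1 - Real.exp (c * τ)) / (-c)) := by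
    have hpt : ∀ a : ℝ, ‖F i a‖ ^ 2 = Real.exp (c * a) * ‖T (Φ i)‖ ^ 2 := by
      intro a
      rw [hFnorm, mul_pow, ← Real.exp_nat_mul]
      congr 2
      rw [hc]; push_cast; ring
    simp_rw [hpt]
    rw [integral_mul_const, hμ, ← intervalIntegral.integral_of_le hτ.le,
      integral_exp_mul_real c hcneg.ne, mul_zero, Real.exp_zero]
    field_simp
    ring
  refine le_of_eq ?_
  rw [hint, Real.sqrt_mul (sq_nonneg _), Real.sqrt_sq (norm_nonneg _),
    Real.sqrt_div (by linarith : (0:ℝ) ≤ 1 - Real.exp (c * τ)),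
    hTnorm]
  have h4 : -2 * (lam i).re = -c := by rw [hc]; ring
  have h5 : 2 * (lam i).re * τ = c * τ := by rw [hc]
  rw [h4, h5]
  ring
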